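/- Let N = 4L+1. The vectors u_n ∈ ℝ^N defined by u_n(k) = S(3L+n+k)S(3L+n-k) for -L ≤ n ≤ L are linearly independent. -/

import Mathlib

open scoped Real BigOperators

/-- `S N k = ∏_{j=1}^{k} 2 sin(π j / N)`, with `S N 0 = 1` (empty product);
note `S N k = 0` for `k ≥ N`. -/
noncomputable def S (N : ℕ) (k : ℕ) : ℝ :=
  ∏ j ∈ Finset.Icc 1 k, 2 * Real.sin (Real.pi * j / N)

/-- The index set `I_N = {-M+1, ..., -M+N}` with `M = ⌊(N+1)/2⌋`.
For `N = 4L+1` this is `{-2L, ..., 2L}`. -/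
noncomputable def Iset (N : ℕ) : Finset ℤ :=
  Finset.Icc (1 - (((N + 1) / 2 : ℕ) : ℤ)) ((N : ℤ) - (((N + 1) / 2 : ℕ) : ℤ))

/-- The centered discrete Fourier transform. -/
noncomputable def dft (N : ℕ) (u : ℤ → ℂ) (l : ℤ) : ℂ :=
  (Real.sqrt N : ℂ)⁻¹ *
    ∑ k ∈ Iset N, Complex.exp (-2 * Real.pi * Complex.I * k * l / N) * u k

/-- The even vectors `u_n(k) = S(3L+n+k) S(3L+n-k)` (for `N = 4L+1`). -/
noncomputable def uvec (L : ℕ) (n k : ℤ) : ℝ :=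
  S (4 * L + 1) (3 * L + n + k).toNat * S (4 * L + 1) (3 * L + n - k).toNat

/-- The odd vectors `v_n(k) = sin(2πk/N) S(3L+n+k) S(3L+n-k)` (for `N = 4L+1`). -/
noncomputable def vvec (L : ℕ) (n k : ℤ) : ℝ :=
  Real.sin (2 * Real.pi * k / (4 * L + 1)) * uvec L n k

lemma S_pos' {N k : ℕ} (h : k < N) : 0 < S N k := by
  apply Finset.prod_pos
  intro j hj
  simp only [Finset.mem_Icc] at hj
  have hN : (0:ℝ) < N := by exact_mod_cast Nat.pos_of_ne_zero (by omega)
  have hj1 : (1:ℝ) ≤ j := by exact_mod_cast hj.1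
  have hjN : (j:ℝ) < N := by exact_mod_cast lt_of_le_of_lt hj.2 h
  have h1 : 0 < Real.sin (Real.pi * j / N) := by
    apply Real.sin_pos_of_pos_of_lt_pi
    · positivity
    · rw [div_lt_iff₀ hN]
      nlinarith [Real.pi_pos]
  linarith

lemma S_zero' {N k : ℕ} (hN : 0 < N) (h : N ≤ k) : S N k = 0 := by
  apply Finset.prod_eq_zero (i := N)
  · simp only [Finset.mem_Icc]; omega
  · have hne : (N:ℝ) ≠ 0 := Nat.cast_ne_zero.2 hN.ne'
    rw [mul_div_assoc, div_self hne, mul_one, Real.sin_pi, mul_zero]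

lemma uvec_zero' (L : ℕ) {m n : ℤ} (hn : n < m) :
    uvec L m ((L:ℤ) - n) = 0 := by
  unfold uvec
  have h : S (4*L+1) ((3*(L:ℤ) + m + ((L:ℤ) - n)).toNat) = 0 := by
    apply S_zero' (by omega)
    omega
  rw [h, zero_mul]

lemma uvec_pos' (L : ℕ) {n : ℤ} (h1 : -(L:ℤ) ≤ n) (h2 : n ≤ L) :
    0 < uvec L n ((L:ℤ) - n) := by
  unfold uvec
  apply mul_pos
  · apply S_pos'; omega
  · apply S_pos'; omega

theorem stmt11 (L : ℕ) (hL : 1 ≤ L) :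
    LinearIndependent ℝ (fun n : {n : ℤ // -(L : ℤ) ≤ n ∧ n ≤ L} =>
      (fun k : {k : ℤ // k ∈ Iset (4 * L + 1)} => uvec L n.1 k.1)) := by
  rw [linearIndependent_iff']
  intro s g hsum i hi
  by_contra hgi
  set t := s.filter (fun j => g j ≠ 0) with ht
  have htne : t.Nonempty := ⟨i, Finset.mem_filter.2 ⟨hi, hgi⟩⟩
  obtain ⟨n₀, hn₀t, hmin⟩ := t.exists_min_image (fun j => j.1) htne
  have hn₀s : n₀ ∈ s := (Finset.mem_filter.1 hn₀t).1
  have hg₀ : g n₀ ≠ 0 := (Finset.mem_filter.1 hn₀t).2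
  have hk₀ : (L : ℤ) - n₀.1 ∈ Iset (4 * L + 1) := by
    simp only [Iset, Finset.mem_Icc]
    have h1 := n₀.2.1
    have h2 := n₀.2.2
    omega
  have heval : ∑ j ∈ s, g j * uvec L j.1 ((L:ℤ) - n₀.1) = 0 := by
    have := congrFun hsum ⟨(L:ℤ) - n₀.1, hk₀⟩
    simpa [Finset.sum_apply] using this
  rw [Finset.sum_eq_single n₀] at heval
  · have hu : 0 < uvec L n₀.1 ((L:ℤ) - n₀.1) := uvec_pos' L n₀.2.1 n₀.2.2
    exact hg₀ (by
      rcases mul_eq_zero.1 heval with h | h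
      · exact h
      · exact absurd h hu.ne')
  · intro j hjs hjne
    by_cases hgj : g j = 0
    · rw [hgj, zero_mul]
    · have hj : n₀.1 ≤ j.1 := hmin j (Finset.mem_filter.2 ⟨hjs, hgj⟩)
      have hlt : n₀.1 < j.1 := lt_of_le_of_ne hj (fun h => hjne (Subtype.ext h.symm))
      rw [uvec_zero' L hlt, mul_zero]
  · intro h; exact absurd hn₀s h
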